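/- Let k ≥ 4 and let a_1, …, a_k be nonnegative reals satisfying: 2a_1 - a_2 ≥ 0; 2a_i - a_{i-1} - a_{i+1} ≥ 0 for 2 ≤ i ≤ k-3; 2a_{k-2} - a_{k-3} - a_{k-1} - a_k ≥ 0; 2a_{k-1} - a_{k-2} ≥ 0; 2a_k - a_{k-2} ≥ 0. Then min(2a_1, a_2, …, a_{k-2}, 2a_{k-1}, 2a_k) = a_2, i.e., a_2 ≤ 2a_1, a_2 ≤ a_i for 3 ≤ i ≤ k-2, a_2 ≤ 2a_{k-1}, and a_2 ≤ 2a_k. -/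
import Mathlib


theorem stmt3 (k : ℕ) (hk : 4 ≤ k) (a : ℕ → ℝ)
    (hnn : ∀ i, 1 ≤ i → i ≤ k → 0 ≤ a i)
    (h1 : 2 * a 1 - a 2 ≥ 0)
    (hmid : ∀ i, 2 ≤ i → i ≤ k - 3 → 2 * a i - a (i - 1) - a (i + 1) ≥ 0)
    (hbr : 2 * a (k - 2) - a (k - 3) - a (k - 1) - a k ≥ 0)
    (hk1 : 2 * a (k - 1) - a (k - 2) ≥ 0)
    (hk2 : 2 * a k - a (k - 2) ≥ 0) :
    a 2 ≤ 2 * a 1 ∧ (∀ i, 3 ≤ i → i ≤ k - 2 → a 2 ≤ a i) ∧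
      a 2 ≤ 2 * a (k - 1) ∧ a 2 ≤ 2 * a k := by
  obtain ⟨m, rfl⟩ := Nat.exists_eq_add_of_le hk
  simp only [show 4 + m - 1 = m + 3 from by omega, show 4 + m - 2 = m + 2 from by omega,
    show 4 + m - 3 = m + 1 from by omega] at hmid hbr hk1 hk2 ⊢
  -- a (m+2) ≥ a (m+1)
  have amm : a (m + 1) ≤ a (m + 2) := by linarith
  -- key: differences are bounded below by a(m+2) - a(m+1)
  have key : ∀ n j, j + n = m + 1 → 1 ≤ j →
      a (m + 2) - a (m + 1) ≤ a (j + 1) - a j := by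
    intro n
    induction n with
    | zero =>
      intro j hj _
      have : j = m + 1 := by omega
      subst this; linarith
    | succ n ih =>
      intro j hj hj1
      have h2 := ih (j + 1) (by omega) (by omega)
      have h3 := hmid (j + 1) (by omega) (by omega)
      have ej : j + 1 - 1 = j := by omega
      rw [ej] at h3
      linarith
  have mono : ∀ j, 1 ≤ j → j ≤ m + 1 → a j ≤ a (j + 1) := by
    intro j hj1 hj2
    have := key (m + 1 - j) j (by omega) hj1
    linarith
  have a2le : ∀ i, 2 ≤ i → i ≤ m + 2 → a 2 ≤ a i := by
    intro i h2i
    induction i with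
    | zero => omega
    | succ n ih =>
      intro hn
      rcases Nat.lt_or_ge 2 (n + 1) with h | h
      · have := mono n (by omega) (by omega)
        have := ih (by omega) (by omega)
        linarith
      · have : n + 1 = 2 := by omega
        rw [this]
  refine ⟨by linarith, fun i h3 hi => a2le i (by omega) (by omega), ?_, ?_⟩
  · have := a2le (m + 2) (by omega) le_rfl
    linarith
  · have := a2le (m + 2) (by omega) le_rfl
    linarith
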